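/- Each of the rewriting moves (replace factor ρμ by μρ; replace prefix w₀ρλw₁λμ by w₀λρw₁μλ; replace prefix w₀λρw₁λμ by w₀ρλw₁μλ, where D_{ρ,λ}(w₀)=1 and w₁ ∈ L_{1,∞}) sends a word in L_{2,∞} to another word in L_{2,∞}. -/
import Mathlib

inductive Letter | rho | lam | mu
deriving DecidableEq

open Letter

def Dc (a b : Letter) (u : List Letter) : ℤ :=
  (u.count a : ℤ) - (u.count b : ℤ)

def Linf (k : ℕ) (w : List Letter) : Prop :=
  (∀ u : List Letter, u <+: w → 0 ≤ Dc rho lam u ∧ Dc rho lam u ≤ (k : ℤ) ∧ 0 ≤ Dc lam mu u) ∧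
  Dc rho lam w = 0 ∧ Dc lam mu w = 0

inductive Step : List Letter → List Letter → Prop
  | rhomu (a b : List Letter) :
      Step (a ++ [rho, mu] ++ b) (a ++ [mu, rho] ++ b)
  | move2 (w₀ w₁ rest : List Letter) (h₀ : Dc rho lam w₀ = 1) (h₁ : Linf 1 w₁) :
      Step (w₀ ++ [rho, lam] ++ w₁ ++ [lam, mu] ++ rest)
           (w₀ ++ [lam, rho] ++ w₁ ++ [mu, lam] ++ rest)
  | move3 (w₀ w₁ rest : List Letter) (h₀ : Dc rho lam w₀ = 1) (h₁ : Linf 1 w₁) :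
      Step (w₀ ++ [lam, rho] ++ w₁ ++ [lam, mu] ++ rest)
           (w₀ ++ [rho, lam] ++ w₁ ++ [mu, lam] ++ rest)

lemma Dc_nil (a b : Letter) : Dc a b [] = 0 := rfl

lemma Dc_cons (a b c : Letter) (l : List Letter) :
    Dc a b (c :: l) = ((if c = a then 1 else 0) - (if c = b then 1 else 0)) + Dc a b l := by
  unfold Dc
  simp only [List.count_cons, beq_iff_eq]
  split_ifs <;> push_cast <;> ring

lemma Dc_append (a b : Letter) (u v : List Letter) :
    Dc a b (u ++ v) = Dc a b u + Dc a b v := by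
  unfold Dc; rw [List.count_append, List.count_append]; push_cast; ring

lemma prefix_split {u a b : List Letter} (h : u <+: a ++ b) :
    u <+: a ∨ ∃ v, v <+: b ∧ u = a ++ v := by
  rcases (List.prefix_or_prefix_of_prefix h (List.prefix_append a b)) with h' | h'
  · exact Or.inl h'
  · obtain ⟨v, rfl⟩ := h'
    exact Or.inr ⟨v, (List.prefix_append_right_inj a).mp h, rfl⟩

lemma prefix_cons {c : Letter} {b u : List Letter} (h : u <+: c :: b) :
    u = [] ∨ ∃ v, v <+: b ∧ u = c :: v := by
  cases u with
  | nil => exact Or.inl rfl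
  | cons x t =>
    rw [List.cons_prefix_cons] at h
    exact Or.inr ⟨t, h.2, by rw [h.1]⟩

theorem stmt15 (w w' : List Letter) (hs : Step w w') (hw : Linf 2 w) :
    Linf 2 w' := by
  obtain ⟨hpre, htot1, htot2⟩ := hw
  cases hs with
  | rhomu a b =>
    have hb := hpre a ⟨[rho, mu] ++ b, by simp⟩
    have hseg : ∀ v : List Letter, v <+: b →
        0 ≤ Dc rho lam (a ++ [rho, mu] ++ v) ∧ Dc rho lam (a ++ [rho, mu] ++ v) ≤ 2 ∧
        0 ≤ Dc lam mu (a ++ [rho, mu] ++ v) :=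
      fun v hv => hpre _ ((List.prefix_append_right_inj _).mpr hv)
    refine ⟨fun u hu => ?_, ?_, ?_⟩
    · rw [show a ++ [mu, rho] ++ b = a ++ (mu :: rho :: b) by simp] at hu
      rcases prefix_split hu with hu' | ⟨v, hv, rfl⟩
      · exact hpre u (hu'.trans ⟨[rho, mu] ++ b, by simp⟩)
      · rcases prefix_cons hv with rfl | ⟨v', hv', rfl⟩
        · simpa [Dc_append, Dc_nil] using hb
        · rcases prefix_cons hv' with rfl | ⟨v'', hv'', rfl⟩
          · have h0 := hseg [] (List.nil_prefix)
            simp [Dc_append, Dc_cons, Dc_nil] at h0 hb ⊢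
            omega
          · have h0 := hseg v'' hv''
            simp [Dc_append, Dc_cons, Dc_nil] at h0 ⊢
            omega
    · simp only [Dc_append, Dc_cons, Dc_nil] at htot1 ⊢; norm_num at htot1 ⊢; omega
    · simp only [Dc_append, Dc_cons, Dc_nil] at htot2 ⊢; norm_num at htot2 ⊢; omega
  | move2 w₀ w₁ rest h₀ h₁ =>
    have hb := hpre w₀ ⟨[rho, lam] ++ w₁ ++ [lam, mu] ++ rest, by simp⟩
    have hseg : ∀ s : List Letter, s <+: rest →
        0 ≤ Dc rho lam (w₀ ++ [rho, lam] ++ w₁ ++ [lam, mu] ++ s) ∧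
        Dc rho lam (w₀ ++ [rho, lam] ++ w₁ ++ [lam, mu] ++ s) ≤ 2 ∧
        0 ≤ Dc lam mu (w₀ ++ [rho, lam] ++ w₁ ++ [lam, mu] ++ s) :=
      fun s hs' => hpre _ ((List.prefix_append_right_inj _).mpr hs')
    have e1 := h₁.2.1
    have e2 := h₁.2.2
    refine ⟨fun u hu => ?_, ?_, ?_⟩
    · rw [show w₀ ++ [lam, rho] ++ w₁ ++ [mu, lam] ++ rest
          = w₀ ++ (lam :: rho :: (w₁ ++ (mu :: lam :: rest))) by simp] at hu
      rcases prefix_split hu with hu' | ⟨v, hv, rfl⟩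
      · exact hpre u (hu'.trans ⟨[rho, lam] ++ w₁ ++ [lam, mu] ++ rest, by simp⟩)
      · rcases prefix_cons hv with rfl | ⟨v', hv', rfl⟩
        · simpa [Dc_append, Dc_nil] using hb
        · rcases prefix_cons hv' with rfl | ⟨v'', hv'', rfl⟩
          · simp [Dc_append, Dc_cons, Dc_nil] at hb ⊢
            omega
          · rcases prefix_split hv'' with hu' | ⟨t, ht, rfl⟩
            · have h0 := (h₁.1) _ hu'
              simp [Dc_append, Dc_cons, Dc_nil] at h0 hb ⊢
              omega
            · rcases prefix_cons ht with rfl | ⟨t', ht', rfl⟩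
              · simp [Dc_append, Dc_cons, Dc_nil] at hb ⊢
                omega
              · rcases prefix_cons ht' with rfl | ⟨s, hs', rfl⟩
                · simp [Dc_append, Dc_cons, Dc_nil] at hb ⊢
                  omega
                · have h0 := hseg s hs'
                  simp [Dc_append, Dc_cons, Dc_nil] at h0 ⊢
                  omega
    · simp only [Dc_append, Dc_cons, Dc_nil] at htot1 ⊢; norm_num at htot1 ⊢; omega
    · simp only [Dc_append, Dc_cons, Dc_nil] at htot2 ⊢; norm_num at htot2 ⊢; omega
  | move3 w₀ w₁ rest h₀ h₁ =>
    have hb := hpre w₀ ⟨[lam, rho] ++ w₁ ++ [lam, mu] ++ rest, by simp⟩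
    have hseg : ∀ s : List Letter, s <+: rest →
        0 ≤ Dc rho lam (w₀ ++ [lam, rho] ++ w₁ ++ [lam, mu] ++ s) ∧
        Dc rho lam (w₀ ++ [lam, rho] ++ w₁ ++ [lam, mu] ++ s) ≤ 2 ∧
        0 ≤ Dc lam mu (w₀ ++ [lam, rho] ++ w₁ ++ [lam, mu] ++ s) :=
      fun s hs' => hpre _ ((List.prefix_append_right_inj _).mpr hs')
    have e1 := h₁.2.1
    have e2 := h₁.2.2
    refine ⟨fun u hu => ?_, ?_, ?_⟩
    · rw [show w₀ ++ [rho, lam] ++ w₁ ++ [mu, lam] ++ rest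
          = w₀ ++ (rho :: lam :: (w₁ ++ (mu :: lam :: rest))) by simp] at hu
      rcases prefix_split hu with hu' | ⟨v, hv, rfl⟩
      · exact hpre u (hu'.trans ⟨[lam, rho] ++ w₁ ++ [lam, mu] ++ rest, by simp⟩)
      · rcases prefix_cons hv with rfl | ⟨v', hv', rfl⟩
        · simpa [Dc_append, Dc_nil] using hb
        · rcases prefix_cons hv' with rfl | ⟨v'', hv'', rfl⟩
          · simp [Dc_append, Dc_cons, Dc_nil] at hb ⊢
            omega
          · rcases prefix_split hv'' with hu' | ⟨t, ht, rfl⟩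
            · have h0 := (h₁.1) _ hu'
              simp [Dc_append, Dc_cons, Dc_nil] at h0 hb ⊢
              omega
            · rcases prefix_cons ht with rfl | ⟨t', ht', rfl⟩
              · simp [Dc_append, Dc_cons, Dc_nil] at hb ⊢
                omega
              · rcases prefix_cons ht' with rfl | ⟨s, hs', rfl⟩
                · simp [Dc_append, Dc_cons, Dc_nil] at hb ⊢
                  omega
                · have h0 := hseg s hs'
                  simp [Dc_append, Dc_cons, Dc_nil] at h0 ⊢
                  omega
    · simp only [Dc_append, Dc_cons, Dc_nil] at htot1 ⊢; norm_num at htot1 ⊢; omega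
    · simp only [Dc_append, Dc_cons, Dc_nil] at htot2 ⊢; norm_num at htot2 ⊢; omega
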